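/- Let M be a closed topological n-manifold and let f be a topological flow on M whose chain recurrent set R_f is finite and consists of topologically hyperbolic fixed points. Then the Smale relation p ≺ q ⟺ W^s_p ∩ W^u_q ≠ ∅ (p ≠ q) extends to a total order: there exists an enumeration p_1, …, p_k of the fixed points of f such that whenever W^s_{p_i} ∩ W^u_{p_j} ≠ ∅ and i ≠ j, one has i < j. -/

import Mathlib

open Filter Topology Set

/-- The model linear flow `a^t_λ` on `ℝ^n`. -/
noncomputable def modelFlow (n lam : ℕ) (t : ℝ) (x : Fin n → ℝ) : Fin n → ℝ :=
  fun i => if (i : ℕ) < lam then (2 : ℝ) ^ t * x i else (2 : ℝ) ^ (-t) * x i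

/-- An `ε`-chain of length `T` from `x` to `y` for the flow `f`. -/
def IsEpsChain {M : Type*} [MetricSpace M] (f : ℝ → M → M) (ε T : ℝ) (x y : M) : Prop :=
  ∃ (m : ℕ) (xs : ℕ → M) (ts : ℕ → ℝ), 0 < m ∧ xs 0 = x ∧ xs m = y ∧
    (∀ i ∈ Finset.Icc 1 m, 1 ≤ ts i ∧ dist (f (ts i) (xs (i - 1))) (xs i) < ε) ∧
    ∑ i ∈ Finset.Icc 1 m, ts i = T

/-- A point is chain recurrent if for every `ε > 0` there is an `ε`-chain of some
length `T` from the point to itself. -/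
def IsChainRecurrent {M : Type*} [MetricSpace M] (f : ℝ → M → M) (x : M) : Prop :=
  ∀ ε > 0, ∃ T > 0, IsEpsChain f ε T x x

/-- The stable manifold `W^s_p`. -/
def stableSet {M : Type*} [TopologicalSpace M] (f : ℝ → M → M) (p : M) : Set M :=
  {y | Tendsto (fun t : ℝ => f t y) atTop (nhds p)}

/-- The unstable manifold `W^u_p`. -/
def unstableSet {M : Type*} [TopologicalSpace M] (f : ℝ → M → M) (p : M) : Set M :=
  {y | Tendsto (fun t : ℝ => f (-t) y) atTop (nhds p)}

/-- `p` is a topologically hyperbolic fixed point of index `lam` of the flow `f`. -/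
def IsTopHyperbolicFixedPt {M : Type*} [TopologicalSpace M] (n : ℕ) (f : ℝ → M → M)
    (p : M) (lam : ℕ) : Prop :=
  lam ≤ n ∧ (∀ t : ℝ, f t p = p) ∧
  ∃ (U : Set M) (_ : IsOpen U) (hp : p ∈ U) (h : U ≃ₜ (Fin n → ℝ)),
    h ⟨p, hp⟩ = 0 ∧
    ∀ (t : ℝ) (y : M) (hy : y ∈ U) (hfy : ∀ s ∈ Set.uIcc (0 : ℝ) t, f s y ∈ U),
      (h ⟨f t y, hfy t Set.right_mem_uIcc⟩ : Fin n → ℝ) = modelFlow n lam t (h ⟨y, hy⟩)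

/-- `p` is a regular point of `φ` (in the sense of continuous Morse theory). -/
def IsRegularPoint {M : Type*} [TopologicalSpace M] (n : ℕ) (φ : M → ℝ) (p : M) : Prop :=
  ∃ (V : Set M) (_ : IsOpen V) (hp : p ∈ V) (ψ : V ≃ₜ (Fin n → ℝ)) (j : Fin n),
    (j : ℕ) + 1 = n ∧ ψ ⟨p, hp⟩ = 0 ∧ ∀ y : V, φ y = φ p + ψ y j

/-- `p` is a non-degenerate critical point of `φ` of index `ν`. -/
def IsNondegenerateCriticalPoint {M : Type*} [TopologicalSpace M] (n : ℕ) (φ : M → ℝ)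
    (p : M) (ν : ℕ) : Prop :=
  ν ≤ n ∧ ¬ IsRegularPoint n φ p ∧
  ∃ (V : Set M) (_ : IsOpen V) (hp : p ∈ V) (ψ : V ≃ₜ (Fin n → ℝ)),
    ψ ⟨p, hp⟩ = 0 ∧
    ∀ y : V, φ y = φ p
      - ∑ i ∈ Finset.univ.filter (fun i : Fin n => (i : ℕ) < ν), (ψ y i) ^ 2
      + ∑ i ∈ Finset.univ.filter (fun i : Fin n => ν ≤ (i : ℕ)), (ψ y i) ^ 2

/-- `M` is locally Euclidean of dimension `n` (every point has a neighborhood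
homeomorphic to `ℝ^n`). -/
def LocallyEuclidean (n : ℕ) (M : Type*) [TopologicalSpace M] : Prop :=
  ∀ p : M, ∃ U : Set M, IsOpen U ∧ p ∈ U ∧ Nonempty (U ≃ₜ (Fin n → ℝ))


/-- Auxiliary: concatenation of `ε`-chains. -/
lemma epsChain_trans' {M : Type*} [MetricSpace M] {f : ℝ → M → M} {ε T1 T2 : ℝ} {x y z : M}
    (h1 : IsEpsChain f ε T1 x y) (h2 : IsEpsChain f ε T2 y z) :
    IsEpsChain f ε (T1 + T2) x z := by
  obtain ⟨m1, xs1, ts1, hm1, hx1, hy1, hc1, hs1⟩ := h1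
  obtain ⟨m2, xs2, ts2, hm2, hx2, hy2, hc2, hs2⟩ := h2
  refine ⟨m1 + m2, fun i => if i ≤ m1 then xs1 i else xs2 (i - m1),
    fun i => if i ≤ m1 then ts1 i else ts2 (i - m1), by omega, ?_, ?_, ?_, ?_⟩
  · simp [hx1]
  · dsimp only
    rw [if_neg (by omega)]
    simpa using hy2
  · intro i hi
    dsimp only
    simp only [Finset.mem_Icc] at hi
    by_cases h : i ≤ m1
    · have h' : i - 1 ≤ m1 := by omega
      rw [if_pos h, if_pos h, if_pos h']
      exact hc1 i (Finset.mem_Icc.mpr ⟨hi.1, h⟩)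
    · rw [if_neg h, if_neg h]
      have key := hc2 (i - m1) (Finset.mem_Icc.mpr ⟨by omega, by omega⟩)
      by_cases h' : i - 1 ≤ m1
      · have hi1 : i = m1 + 1 := by omega
        rw [if_pos h']
        have e1 : xs1 (i - 1) = y := by rw [show i - 1 = m1 by omega]; exact hy1
        have e2 : i - m1 - 1 = 0 := by omega
        rw [e2, hx2, ← e1] at key
        exact key
      · rw [if_neg h']
        rwa [show i - m1 - 1 = i - 1 - m1 by omega] at key
  · have hsplit : Finset.Icc 1 (m1 + m2) = Finset.Ioc 0 (m1 + m2) := by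
      ext i; simp [Nat.lt_iff_add_one_le]
    rw [hsplit, ← Finset.sum_Ioc_consecutive _ (Nat.zero_le m1) (Nat.le_add_right m1 m2)]
    have e1 : ∑ i ∈ Finset.Ioc 0 m1, (if i ≤ m1 then ts1 i else ts2 (i - m1)) = T1 := by
      rw [← hs1]
      refine Finset.sum_congr (by ext i; simp [Nat.lt_iff_add_one_le]) fun i hi => ?_
      simp only [Finset.mem_Icc] at hi
      rw [if_pos hi.2]
    have e2 : ∑ i ∈ Finset.Ioc m1 (m1 + m2), (if i ≤ m1 then ts1 i else ts2 (i - m1)) = T2 := by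
      rw [← hs2]
      refine Finset.sum_nbij' (fun i => i - m1) (fun j => j + m1) ?_ ?_ ?_ ?_ ?_
      · intro i hi; simp only [Finset.mem_Icc, Finset.mem_Ioc] at hi ⊢; omega
      · intro j hj; simp only [Finset.mem_Icc, Finset.mem_Ioc] at hj ⊢; omega
      · intro i hi; simp only [Finset.mem_Ioc] at hi; omega
      · intro j hj; simp only [Finset.mem_Icc] at hj; omega
      · intro i hi; simp only [Finset.mem_Ioc] at hi; rw [if_neg (by omega)]
    rw [e1, e2]

/-- Auxiliary: topological sorting of a finite acyclic relation. -/
lemma topSort_aux {α : Type*} [Fintype α] (S : α → α → Prop)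
    (h : ∀ a, ¬ Relation.TransGen S a a) :
    ∃ e : Fin (Fintype.card α) ≃ α, ∀ i j, S (e i) (e j) → i < j := by
  classical
  let le : α → α → Prop := fun a b => a = b ∨ Relation.TransGen S a b
  haveI : IsPartialOrder α le :=
    { refl := fun a => Or.inl rfl
      trans := by
        rintro a b c (rfl | hab) (rfl | hbc)
        · exact Or.inl rfl
        · exact Or.inr hbc
        · exact Or.inr hab
        · exact Or.inr (hab.trans hbc)
      antisymm := by
        rintro a b (rfl | hab) (h' | hba)
        · rfl
        · rfl
        · exact h'.symm
        · exact absurd (hab.trans hba) (h a) }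
  obtain ⟨s, hs, hle⟩ := extend_partialOrder le
  let lt : α → α → Prop := fun a b => s a b ∧ a ≠ b
  haveI : IsStrictTotalOrder α lt :=
    { trichotomous := by
        intro a b hab' hba'
        by_contra hne
        rcases hs.2.total a b with hab | hba
        · exact hab' ⟨hab, hne⟩
        · exact hba' ⟨hba, Ne.symm hne⟩
      irrefl := fun a ha => ha.2 rfl
      trans := by
        rintro a b c ⟨hab, hab'⟩ ⟨hbc, hbc'⟩
        refine ⟨hs.1.1.2.trans a b c hab hbc, ?_⟩
        rintro rfl
        exact hab' (hs.1.2.antisymm a b hab hbc) }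
  letI : LinearOrder α := linearOrderOfSTO lt
  let e := monoEquivOfFin α rfl
  refine ⟨e.toEquiv, fun i j hS => ?_⟩
  have hne : e i ≠ e j := by
    intro hEq
    have hS' : S (e i) (e j) := hS
    rw [← hEq] at hS'
    exact h (e i) (Relation.TransGen.single hS')
  have hlt : lt (e i) (e j) := ⟨hle _ _ (Or.inr (Relation.TransGen.single hS)), hne⟩
  have : (e i : α) < e j := hlt
  exact e.lt_iff_lt.mp this

/-- The Smale relation `p ≺ q ⟺ W^s_p ∩ W^u_q ≠ ∅` on the finite
hyperbolic chain recurrent set extends to a total order: the fixed points can be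
enumerated `p_1, …, p_k` so that `W^s_{p_i} ∩ W^u_{p_j} ≠ ∅` and `i ≠ j` imply `i < j`. -/
theorem stmt18 {M : Type*} [MetricSpace M] [CompactSpace M] (n : ℕ)
    (hM : LocallyEuclidean n M)
    (f : ℝ → M → M)
    (hf_cont : Continuous fun q : ℝ × M => f q.1 q.2)
    (hf_zero : ∀ x, f 0 x = x)
    (hf_add : ∀ s t : ℝ, ∀ x, f t (f s x) = f (t + s) x)
    (R : Set M) (hR : R = {x | IsChainRecurrent f x}) (hRfin : R.Finite)
    (hRhyp : ∀ p ∈ R, ∃ lam : ℕ, IsTopHyperbolicFixedPt n f p lam) :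
    ∃ (k : ℕ) (p : Fin k → M), Function.Injective p ∧ Set.range p = R ∧
      ∀ i j : Fin k, (stableSet f (p i) ∩ unstableSet f (p j)).Nonempty → i ≠ j → i < j := by
  classical
  haveI := hRfin.fintype
  have hfix : ∀ p ∈ R, ∀ t, f t p = p := by
    intro p hp t
    obtain ⟨lam, hhyp⟩ := hRhyp p hp
    exact hhyp.2.1 t
  set C : M → M → Prop := fun x y => ∀ ε > 0, ∃ T > 0, IsEpsChain f ε T x y with hC
  have hCtrans : ∀ {x y z : M}, C x y → C y z → C x z := by
    intro x y z h1 h2 ε hε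
    obtain ⟨T1, hT1, hc1⟩ := h1 ε hε
    obtain ⟨T2, hT2, hc2⟩ := h2 ε hε
    exact ⟨T1 + T2, by linarith, epsChain_trans' hc1 hc2⟩
  have hstable : ∀ (x p : M), x ∈ stableSet f p → C x p := by
    intro x p hx ε hε
    have hx' : Tendsto (fun t : ℝ => f t x) atTop (nhds p) := hx
    rw [Metric.tendsto_atTop] at hx'
    obtain ⟨N, hN⟩ := hx' ε hε
    refine ⟨max N 1, lt_of_lt_of_le one_pos (le_max_right N 1), 1,
      (fun i => if i = 0 then x else p), (fun _ => max N 1), one_pos, by simp, by simp, ?_, by simp⟩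
    intro i hi
    simp only [Finset.mem_Icc] at hi
    have hi1 : i = 1 := by omega
    subst hi1
    refine ⟨le_max_right N 1, ?_⟩
    simpa using hN (max N 1) (le_max_left N 1)
  have hunstable : ∀ (x q : M), (∀ t, f t q = q) → x ∈ unstableSet f q → C q x := by
    intro x q hq hx ε hε
    have hx' : Tendsto (fun t : ℝ => f (-t) x) atTop (nhds q) := hx
    rw [Metric.tendsto_atTop] at hx'
    obtain ⟨N, hN⟩ := hx' ε hε
    set T := max N 1 with hTdef
    have hT1 : (1 : ℝ) ≤ T := le_max_right N 1
    refine ⟨1 + T, by linarith, 2,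
      (fun i => if i = 0 then q else if i = 1 then f (-T) x else x),
      (fun i => if i = 1 then 1 else T), two_pos, by simp, by norm_num, ?_, ?_⟩
    · intro i hi
      simp only [Finset.mem_Icc] at hi
      obtain ⟨hia, hib⟩ := hi
      interval_cases i
      · dsimp only
        rw [if_pos rfl, show (1:ℕ) - 1 = 0 from rfl, if_pos rfl,
            if_neg one_ne_zero, if_pos rfl]
        exact ⟨le_refl 1, by rw [hq 1, dist_comm]; exact hN T (le_max_left N 1)⟩
      · dsimp only
        rw [if_neg (by norm_num : ¬(2:ℕ) = 1), show (2:ℕ) - 1 = 1 from rfl,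
            if_neg one_ne_zero, if_pos rfl,
            if_neg (by norm_num : ¬(2:ℕ) = 0), if_neg (by norm_num : ¬(2:ℕ) = 1)]
        refine ⟨hT1, ?_⟩
        rw [hf_add, add_neg_cancel, hf_zero, dist_self]
        exact hε
    · rw [show Finset.Icc 1 2 = {1, 2} from rfl]
      rw [Finset.sum_insert (by norm_num), Finset.sum_singleton]
      norm_num
  have hCR : ∀ x : M, C x x → x ∈ R := by
    intro x hx
    rw [hR]
    exact hx
  have hfixlim_s : ∀ (x p : M), (∀ t, f t x = x) → x ∈ stableSet f p → x = p := by
    intro x p hfx hx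
    have hx' : Tendsto (fun t : ℝ => f t x) atTop (nhds p) := hx
    have hx'' : Tendsto (fun _ : ℝ => x) atTop (nhds p) := by
      simpa [hfx] using hx'
    exact tendsto_nhds_unique tendsto_const_nhds hx''
  have hfixlim_u : ∀ (x q : M), (∀ t, f t x = x) → x ∈ unstableSet f q → x = q := by
    intro x q hfx hx
    have hx' : Tendsto (fun t : ℝ => f (-t) x) atTop (nhds q) := hx
    have hx'' : Tendsto (fun _ : ℝ => x) atTop (nhds q) := by
      simpa [hfx] using hx'
    exact tendsto_nhds_unique tendsto_const_nhds hx''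
  set S : R → R → Prop := fun a b =>
    (stableSet f (a : M) ∩ unstableSet f (b : M)).Nonempty ∧ (a : M) ≠ (b : M) with hS
  have hedge : ∀ a b : R, S a b → C (b : M) (a : M) := by
    intro a b hab
    obtain ⟨x, hxs, hxu⟩ := hab.1
    exact hCtrans (hunstable x b (hfix b b.2) hxu) (hstable x a hxs)
  have hTG : ∀ a b : R, Relation.ReflTransGen S a b → (b : M) = (a : M) ∨ C (b : M) (a : M) := by
    intro a b hab
    induction hab with
    | refl => exact Or.inl rfl
    | tail _ h ih =>
      rcases ih with hba | hCba
      · exact Or.inr (by rw [← hba]; exact hedge _ _ h)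
      · exact Or.inr (hCtrans (hedge _ _ h) hCba)
  have hacyc : ∀ a : R, ¬ Relation.TransGen S a a := by
    intro a ha
    obtain ⟨c, hSc, htc⟩ := Relation.TransGen.head'_iff.mp ha
    obtain ⟨x, hxs, hxu⟩ := hSc.1
    have hCac : C (a : M) (c : M) := by
      rcases hTG c a htc with hac | hC
      · exact absurd hac hSc.2
      · exact hC
    have hCx : C x x :=
      hCtrans (hCtrans (hstable x a hxs) hCac) (hunstable x c (hfix c c.2) hxu)
    have hxR : x ∈ R := hCR x hCx
    have hxfix : ∀ t, f t x = x := hfix x hxR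
    have h1 : x = (a : M) := hfixlim_s x a hxfix hxs
    have h2 : x = (c : M) := hfixlim_u x c hxfix hxu
    exact hSc.2 (h1.symm.trans h2)
  obtain ⟨e, he⟩ := topSort_aux S hacyc
  refine ⟨Fintype.card R, fun i => ((e i : R) : M), ?_, ?_, ?_⟩
  · intro i j hij
    exact e.injective (Subtype.ext hij)
  · apply Set.eq_of_subset_of_subset
    · rintro x ⟨i, rfl⟩
      exact (e i).2
    · intro x hx
      obtain ⟨i, hi⟩ := e.surjective ⟨x, hx⟩
      exact ⟨i, congrArg Subtype.val hi⟩
  · intro i j hne hij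
    refine he i j ⟨hne, ?_⟩
    intro hEq
    exact hij (e.injective (Subtype.ext hEq))
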